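/- For a finite MDP M and target set T, the maximal reachability probability function s ↦ Pr^max_{M,s}(reach T) is the least fixed point (over [0,1]^S, pointwise order) of the Bellman operator F(x)(s) = 1 if s ∈ T and max_{a ∈ A(s)} Σ_{s'} P(s,a)(s')·x(s') otherwise; in particular it satisfies the Bellman optimality equations. -/
import Mathlib


open Classical

open Classical in
/-- `n`-step reachability probability of the target `T` under the (deterministic,
history-dependent) strategy `σ`, starting from state `s` with history `h`. -/
noncomputable def reachN {S A : Type*} [Fintype S]
    (P : S → A → S → ℝ) (T : Set S) (σ : List S → S → A) :
    ℕ → List S → S → ℝ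
  | 0, _, s => if s ∈ T then 1 else 0
  | n + 1, h, s =>
      if s ∈ T then 1 else ∑ s', P s (σ h s) s' * reachN P T σ n (h ++ [s]) s'

open Classical in
/-- The maximal reachability probability `Pr^max_{M,s}(reach T)`, as the supremum
over all (valid) strategies of the limit of the `n`-step reachability values. -/
noncomputable def maxReach {S A : Type*} [Fintype S]
    (P : S → A → S → ℝ) (enab : S → Finset A) (T : Set S) (s : S) : ℝ :=
  ⨆ σ : { σ : List S → S → A // ∀ h s', σ h s' ∈ enab s' },
    ⨆ n : ℕ, reachN P T σ.1 n [] s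

open Classical in
/-- The Bellman operator `F` for maximal reachability. -/
noncomputable def bellman {S A : Type*} [Fintype S]
    (P : S → A → S → ℝ) (enab : S → Finset A) (henab : ∀ s, (enab s).Nonempty)
    (T : Set S) (x : S → ℝ) : S → ℝ :=
  fun s =>
    if s ∈ T then 1
    else (enab s).sup' (henab s) (fun a => ∑ s', P s a s' * x s')


section aux
variable {S A : Type*} [Fintype S] (P : S → A → S → ℝ) (T : Set S)

theorem reachN_zero (σ : List S → S → A) (h : List S) (s : S) :
    reachN P T σ 0 h s = if s ∈ T then 1 else 0 := rfl

theorem reachN_succ (σ : List S → S → A) (n : ℕ) (h : List S) (s : S) :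
    reachN P T σ (n+1) h s =
      if s ∈ T then 1 else ∑ s', P s (σ h s) s' * reachN P T σ n (h ++ [s]) s' := rfl

theorem reachN_congr (σ σ' : List S → S → A) (n : ℕ) :
    ∀ (h₁ h₂ : List S) (s : S),
      σ h₁ s = σ' h₂ s →
      (∀ h' t, σ (h₁ ++ s :: h') t = σ' (h₂ ++ s :: h') t) →
      reachN P T σ n h₁ s = reachN P T σ' n h₂ s := by
  induction n with
  | zero => intro h₁ h₂ s _ _; rfl
  | succ n ih =>
    intro h₁ h₂ s e e'
    rw [reachN_succ, reachN_succ, e]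
    split
    · rfl
    · refine Finset.sum_congr rfl fun s' _ => ?_
      congr 1
      refine ih (h₁ ++ [s]) (h₂ ++ [s]) s' ?_ ?_
      · simpa using e' [] s'
      · intro h' t; simpa using e' (s' :: h') t

variable (enab : S → Finset A)

theorem reachN_nonneg (σ : List S → S → A) (hσ : ∀ h s', σ h s' ∈ enab s')
    (hP0 : ∀ s, ∀ a ∈ enab s, ∀ s', 0 ≤ P s a s') :
    ∀ (n : ℕ) (h : List S) (s : S), 0 ≤ reachN P T σ n h s := by
  intro n
  induction n with
  | zero => intro h s; rw [reachN_zero]; split <;> norm_num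
  | succ n ih =>
    intro h s; rw [reachN_succ]; split
    · norm_num
    · exact Finset.sum_nonneg fun s' _ =>
        mul_nonneg (hP0 s _ (hσ h s) s') (ih _ s')

theorem reachN_le_one (σ : List S → S → A) (hσ : ∀ h s', σ h s' ∈ enab s')
    (hP0 : ∀ s, ∀ a ∈ enab s, ∀ s', 0 ≤ P s a s')
    (hP1 : ∀ s, ∀ a ∈ enab s, ∑ s', P s a s' = 1) :
    ∀ (n : ℕ) (h : List S) (s : S), reachN P T σ n h s ≤ 1 := by
  intro n
  induction n with
  | zero => intro h s; rw [reachN_zero]; split <;> norm_num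
  | succ n ih =>
    intro h s; rw [reachN_succ]; split
    · norm_num
    · calc ∑ s', P s (σ h s) s' * reachN P T σ n (h ++ [s]) s'
          ≤ ∑ s', P s (σ h s) s' * 1 :=
            Finset.sum_le_sum fun s' _ =>
              mul_le_mul_of_nonneg_left (ih _ s') (hP0 s _ (hσ h s) s')
        _ = 1 := by simp [hP1 s _ (hσ h s)]

theorem reachN_mono (σ : List S → S → A) (hσ : ∀ h s', σ h s' ∈ enab s')
    (hP0 : ∀ s, ∀ a ∈ enab s, ∀ s', 0 ≤ P s a s') {n m : ℕ} (hnm : n ≤ m)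
    (h : List S) (s : S) : reachN P T σ n h s ≤ reachN P T σ m h s := by
  have key : ∀ (n : ℕ) (h : List S) (s : S),
      reachN P T σ n h s ≤ reachN P T σ (n+1) h s := by
    intro n
    induction n with
    | zero =>
      intro h s; rw [reachN_zero, reachN_succ]; split
      · norm_num
      · exact Finset.sum_nonneg fun s' _ =>
          mul_nonneg (hP0 s _ (hσ h s) s')
            (reachN_nonneg P T enab σ hσ hP0 0 _ s')
    | succ n ih =>
      intro h s; rw [reachN_succ, reachN_succ]; split
      · norm_num
      · exact Finset.sum_le_sum fun s' _ =>
          mul_le_mul_of_nonneg_left (ih _ s') (hP0 s _ (hσ h s) s')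
  induction hnm with
  | refl => exact le_refl _
  | step _ ih => exact le_trans ih (key _ _ _)


noncomputable def combStrat {S A : Type*} (enab : S → Finset A)
    (henab : ∀ s, (enab s).Nonempty) (s : S) (a : A)
    (τ : S → (List S → S → A)) : List S → S → A
  | [], t => if t = s then a else (henab t).choose
  | [_], t => τ t [] t
  | _ :: s₁ :: h', t => τ s₁ (s₁ :: h') t

section aux2
variable {S A : Type*} [Fintype S] (P : S → A → S → ℝ)
  (enab : S → Finset A) (henab : ∀ s, (enab s).Nonempty) (T : Set S)
  (hP0 : ∀ s, ∀ a ∈ enab s, ∀ s', 0 ≤ P s a s')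
  (hP1 : ∀ s, ∀ a ∈ enab s, ∑ s', P s a s' = 1)

theorem maxReach_eq (s : S) : maxReach P enab T s =
    ⨆ σ : { σ : List S → S → A // ∀ h s', σ h s' ∈ enab s' },
      ⨆ n : ℕ, reachN P T σ.1 n [] s := rfl

theorem valid_nonempty (henab' : ∀ s, (enab s).Nonempty) :
    Nonempty { σ : List S → S → A // ∀ h s', σ h s' ∈ enab s' } :=
  ⟨⟨fun _ s' => (henab' s').choose, fun _ s' => (henab' s').choose_spec⟩⟩

include hP0 hP1 in
theorem inner_bdd (σ : { σ : List S → S → A // ∀ h s', σ h s' ∈ enab s' })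
    (s : S) : BddAbove (Set.range fun n : ℕ => reachN P T σ.1 n [] s) :=
  ⟨1, by rintro x ⟨n, rfl⟩; exact reachN_le_one P T enab σ.1 σ.2 hP0 hP1 n [] s⟩

include hP0 hP1 in
theorem outer_bdd (s : S) : BddAbove (Set.range fun
    σ : { σ : List S → S → A // ∀ h s', σ h s' ∈ enab s' } =>
      ⨆ n : ℕ, reachN P T σ.1 n [] s) :=
  ⟨1, by
    rintro x ⟨σ, rfl⟩
    exact ciSup_le fun n => reachN_le_one P T enab σ.1 σ.2 hP0 hP1 n [] s⟩

include hP0 hP1 in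
theorem reachN_le_maxReach (σ : List S → S → A)
    (hσ : ∀ h s', σ h s' ∈ enab s') (n : ℕ) (h : List S) (s : S) :
    reachN P T σ n h s ≤ maxReach P enab T s := by
  have key : reachN P T σ n h s = reachN P T (fun h' t => σ (h ++ h') t) n [] s :=
    reachN_congr P T _ _ n h [] s (by simp) (by intro h' t; simp)
  rw [key, maxReach_eq]
  have hv : ∀ h' s', (fun h' t => σ (h ++ h') t) h' s' ∈ enab s' :=
    fun h' s' => hσ _ s'
  calc reachN P T (fun h' t => σ (h ++ h') t) n [] s
      ≤ ⨆ m : ℕ, reachN P T (fun h' t => σ (h ++ h') t) m [] s :=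
        le_ciSup (inner_bdd P enab T hP0 hP1 ⟨_, hv⟩ s) n
    _ ≤ _ := le_ciSup (outer_bdd P enab T hP0 hP1 s) (⟨_, hv⟩ :
        { σ : List S → S → A // ∀ h s', σ h s' ∈ enab s' })

include henab hP0 hP1 in
theorem maxReach_nonneg (s : S) : 0 ≤ maxReach P enab T s := by
  obtain ⟨σ⟩ := valid_nonempty (A := A) enab henab
  exact le_trans (reachN_nonneg P T enab σ.1 σ.2 hP0 0 [] s)
    (reachN_le_maxReach P enab T hP0 hP1 σ.1 σ.2 0 [] s)

include henab hP0 hP1 in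
theorem maxReach_le_one (s : S) : maxReach P enab T s ≤ 1 := by
  haveI := valid_nonempty (A := A) enab henab
  rw [maxReach_eq]
  exact ciSup_le fun σ => ciSup_le fun n =>
    reachN_le_one P T enab σ.1 σ.2 hP0 hP1 n [] s

include henab hP0 hP1 in
theorem maxReach_of_mem {s : S} (hs : s ∈ T) : maxReach P enab T s = 1 := by
  haveI := valid_nonempty (A := A) enab henab
  have h1 : ∀ (σ : List S → S → A) (n : ℕ), reachN P T σ n [] s = 1 := by
    intro σ n
    cases n with
    | zero => rw [reachN_zero, if_pos hs]
    | succ n => rw [reachN_succ, if_pos hs]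
  rw [maxReach_eq]
  simp only [h1, ciSup_const]

include henab hP0 hP1 in
theorem reachN_le_fixed (w : S → ℝ) (hw : ∀ s, 0 ≤ w s ∧ w s ≤ 1)
    (hfix : bellman P enab henab T w = w)
    (σ : List S → S → A) (hσ : ∀ h s', σ h s' ∈ enab s') :
    ∀ (n : ℕ) (h : List S) (s : S), reachN P T σ n h s ≤ w s := by
  have hwT : ∀ s, s ∈ T → w s = 1 := fun s hs => by
    have := congrFun hfix s
    simp only [bellman, if_pos hs] at this
    exact this.symm
  have hsup : ∀ s, s ∉ T →
      (enab s).sup' (henab s) (fun a => ∑ s', P s a s' * w s') = w s := fun s hs => by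
    have := congrFun hfix s
    simpa [bellman, if_neg hs] using this
  intro n
  induction n with
  | zero =>
    intro h s; rw [reachN_zero]
    split
    · next hmem => rw [hwT s hmem]
    · exact (hw s).1
  | succ n ih =>
    intro h s; rw [reachN_succ]
    split
    · next hmem => rw [hwT s hmem]
    · next hmem =>
      calc ∑ s', P s (σ h s) s' * reachN P T σ n (h ++ [s]) s'
          ≤ ∑ s', P s (σ h s) s' * w s' :=
            Finset.sum_le_sum fun s' _ => mul_le_mul_of_nonneg_left (ih _ s')
              (hP0 s _ (hσ h s) s')
        _ ≤ _ := Finset.le_sup' (fun a => ∑ s', P s a s' * w s') (hσ h s)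
        _ = w s := hsup s hmem

end aux2

end aux

/-- for a finite MDP, the maximal reachability probability function is
the least fixed point of the Bellman operator on `[0,1]^S`; in particular it
satisfies the Bellman optimality equations. -/
theorem maxReach_lfp_bellman {S A : Type*} [Fintype S] [Fintype A]
    (P : S → A → S → ℝ) (enab : S → Finset A) (henab : ∀ s, (enab s).Nonempty)
    (T : Set S)
    (hP0 : ∀ s, ∀ a ∈ enab s, ∀ s', 0 ≤ P s a s')
    (hP1 : ∀ s, ∀ a ∈ enab s, ∑ s', P s a s' = 1) :
    bellman P enab henab T (maxReach P enab T) = maxReach P enab T ∧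
      ∀ w : S → ℝ, (∀ s, 0 ≤ w s ∧ w s ≤ 1) →
        bellman P enab henab T w = w → ∀ s, maxReach P enab T s ≤ w s := by
  haveI := valid_nonempty (A := A) enab henab
  constructor
  · funext s
    by_cases hs : s ∈ T
    · simp only [bellman, if_pos hs, maxReach_of_mem P enab henab T hP0 hP1 hs]
    · have hbell : bellman P enab henab T (maxReach P enab T) s
          = (enab s).sup' (henab s)
              (fun a => ∑ s', P s a s' * maxReach P enab T s') := by
        simp [bellman, hs]
      apply le_antisymm
      · rw [hbell]
        apply Finset.sup'_le
        intro a ha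
        apply le_of_forall_pos_le_add
        intro ε hε
        have hch : ∀ s' : S,
            ∃ σ : { σ : List S → S → A // ∀ h s', σ h s' ∈ enab s' },
            ∃ n : ℕ, maxReach P enab T s' - ε < reachN P T σ.1 n [] s' := by
          intro s'
          have h1 : maxReach P enab T s' - ε < maxReach P enab T s' := by linarith
          rw [maxReach_eq] at h1
          obtain ⟨σ, hσ⟩ := exists_lt_of_lt_ciSup h1
          obtain ⟨n, hn⟩ := exists_lt_of_lt_ciSup hσ
          exact ⟨σ, n, hn⟩
        choose τ nf hτ using hch
        set N := Finset.univ.sup nf with hNdef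
        have hτN : ∀ s', maxReach P enab T s' - ε < reachN P T (τ s').1 N [] s' :=
          fun s' => lt_of_lt_of_le (hτ s')
            (reachN_mono P T enab (τ s').1 (τ s').2 hP0
              (Finset.le_sup (Finset.mem_univ s')) [] s')
        set σc := combStrat enab henab s a (fun s' => (τ s').1) with hσcdef
        have hσcv : ∀ h t, σc h t ∈ enab t := by
          intro h t
          rcases h with _ | ⟨s₀, _ | ⟨s₁, h'⟩⟩
          · rw [hσcdef]
            show (if t = s then a else (henab t).choose) ∈ enab t
            split
            · next ht => subst ht; exact ha
            · exact (henab t).choose_spec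
          · exact (τ t).2 [] t
          · exact (τ s₁).2 (s₁ :: h') t
        have hkey : ∀ s', reachN P T σc N [s] s' = reachN P T (τ s').1 N [] s' := by
          intro s'
          refine reachN_congr P T _ _ N [s] [] s' ?_ ?_
          · simp [hσcdef, combStrat]
          · intro h' t
            simp [hσcdef, combStrat]
        have hstep : reachN P T σc (N+1) [] s
            = ∑ s', P s a s' * reachN P T (τ s').1 N [] s' := by
          rw [reachN_succ, if_neg hs]
          have ha0 : σc [] s = a := by rw [hσcdef]; simp [combStrat]
          rw [ha0]
          refine Finset.sum_congr rfl fun s' _ => ?_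
          rw [show ([] : List S) ++ [s] = [s] from rfl, hkey s']
        calc ∑ s', P s a s' * maxReach P enab T s'
            ≤ ∑ s', P s a s' * (reachN P T (τ s').1 N [] s' + ε) :=
              Finset.sum_le_sum fun s' _ =>
                mul_le_mul_of_nonneg_left (by linarith [hτN s']) (hP0 s a ha s')
          _ = (∑ s', P s a s' * reachN P T (τ s').1 N [] s') + ε := by
              simp only [mul_add, Finset.sum_add_distrib, ← Finset.sum_mul,
                hP1 s a ha, one_mul]
          _ = reachN P T σc (N+1) [] s + ε := by rw [hstep]
          _ ≤ maxReach P enab T s + ε := by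
              have := reachN_le_maxReach P enab T hP0 hP1 σc hσcv (N+1) [] s
              linarith
      · rw [maxReach_eq]
        refine ciSup_le fun σ => ciSup_le fun n => ?_
        rw [hbell]
        cases n with
        | zero =>
          rw [reachN_zero, if_neg hs]
          obtain ⟨a₀, ha₀⟩ := henab s
          exact le_trans
            (Finset.sum_nonneg fun s' _ => mul_nonneg (hP0 s a₀ ha₀ s')
              (maxReach_nonneg P enab henab T hP0 hP1 s'))
            (Finset.le_sup' (fun a => ∑ s', P s a s' * maxReach P enab T s') ha₀)
        | succ n =>
          rw [reachN_succ, if_neg hs]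
          calc ∑ s', P s (σ.1 [] s) s' * reachN P T σ.1 n ([] ++ [s]) s'
              ≤ ∑ s', P s (σ.1 [] s) s' * maxReach P enab T s' :=
                Finset.sum_le_sum fun s' _ => mul_le_mul_of_nonneg_left
                  (reachN_le_maxReach P enab T hP0 hP1 σ.1 σ.2 n _ s')
                  (hP0 s _ (σ.2 [] s) s')
            _ ≤ _ := Finset.le_sup' (fun a => ∑ s', P s a s' * maxReach P enab T s') (σ.2 [] s)
  · intro w hw hfix s
    rw [maxReach_eq]
    exact ciSup_le fun σ => ciSup_le fun n =>
      reachN_le_fixed P enab henab T hP0 hP1 w hw hfix σ.1 σ.2 n [] s
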